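/- The polynomial 27y₃² - y₂³ is invariant under the vector field v: v(27y₃² - y₂³) is a polynomial multiple of 27y₃² - y₂³. -/
import Mathlib


open MvPolynomial

/-- The derivation `v` of ℚ[x₂,x₃,y₂,y₃] (variables `X 0 = x₂`, `X 1 = x₃`,
`X 2 = y₂`, `X 3 = y₃`) with
`v(x₂) = 2x₂ - 6x₃ + (1/6)(x₂-y₂)x₂`,
`v(x₃) = 3x₃ - (1/3)x₂² + (1/4)(x₂-y₂)x₃`,
`v(y₂) = -(2y₂ - 6y₃ + (1/6)(y₂-x₂)y₂)`,
`v(y₃) = -(3y₃ - (1/3)y₂² + (1/4)(y₂-x₂)y₃)`. -/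
noncomputable def vD : Derivation ℚ (MvPolynomial (Fin 4) ℚ) (MvPolynomial (Fin 4) ℚ) :=
  mkDerivation ℚ
    ![2 * X 0 - 6 * X 1 + C (1/6 : ℚ) * (X 0 - X 2) * X 0,
      3 * X 1 - C (1/3 : ℚ) * X 0 ^ 2 + C (1/4 : ℚ) * (X 0 - X 2) * X 1,
      -(2 * X 2 - 6 * X 3 + C (1/6 : ℚ) * (X 2 - X 0) * X 2),
      -(3 * X 3 - C (1/3 : ℚ) * X 2 ^ 2 + C (1/4 : ℚ) * (X 2 - X 0) * X 3)]

/-- The polynomial `27y₃² - y₂³` is invariant under the vector field `v`: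
`v(27y₃² - y₂³)` is a polynomial multiple of `27y₃² - y₂³`, i.e. the
hypersurface `Δ₂ = {27y₃² - y₂³ = 0}` is tangent to the foliation defined by `v`. -/
theorem delta2_invariant :
    ∃ q : MvPolynomial (Fin 4) ℚ,
      vD (27 * X 3 ^ 2 - X 2 ^ 3) = q * (27 * X 3 ^ 2 - X 2 ^ 3) := by
  use -6 - C (1/2 : ℚ) * (X 2 - X 0)
  have h27 : vD 27 = 0 := by
    have : (27 : MvPolynomial (Fin 4) ℚ) = algebraMap ℚ _ 27 := by
      simp [algebraMap_eq, map_ofNat]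
    rw [this, Derivation.map_algebraMap]
  rw [map_sub, Derivation.leibniz, Derivation.leibniz_pow, Derivation.leibniz_pow, h27]
  have h2 : vD (X 2) = -(2 * X 2 - 6 * X 3 + C (1/6 : ℚ) * (X 2 - X 0) * X 2) := by
    simp [vD, mkDerivation_X]
  have h3 : vD (X 3) = -(3 * X 3 - C (1/3 : ℚ) * X 2 ^ 2 + C (1/4 : ℚ) * (X 2 - X 0) * X 3) := by
    simp [vD, mkDerivation_X]
  rw [h2, h3,
    show (C (1/6 : ℚ) : MvPolynomial (Fin 4) ℚ) = C (1/2 : ℚ) * C (1/3 : ℚ) by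
      rw [← C_mul]; norm_num,
    show (C (1/4 : ℚ) : MvPolynomial (Fin 4) ℚ) = C (1/2 : ℚ) * C (1/2 : ℚ) by
      rw [← C_mul]; norm_num]
  have e3 : (C (1/3 : ℚ) : MvPolynomial (Fin 4) ℚ) * 3 = 1 := by
    rw [show (3 : MvPolynomial (Fin 4) ℚ) = C (3:ℚ) from (map_ofNat C 3).symm, ← C_mul]
    norm_num
  have e2 : (C (1/2 : ℚ) : MvPolynomial (Fin 4) ℚ) * 2 = 1 := by
    rw [show (2 : MvPolynomial (Fin 4) ℚ) = C (2:ℚ) from (map_ofNat C 2).symm, ← C_mul]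
    norm_num
  simp only [smul_eq_mul, nsmul_eq_mul, smul_zero]
  push_cast
  linear_combination (18 * X 2 ^ 2 * X 3 + C (1/2 : ℚ) * (X 2 - X 0) * X 2 ^ 3) * e3
    - 27 * C (1/2 : ℚ) * (X 2 - X 0) * X 3 ^ 2 * e2
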